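/- Define P(x) = Q'(x)/Q(x) - 1 + 2·10^{-1/3} e^{x} Q(x). Then there exists C > 0 such that |P(x)| ≤ C e^{-2|x|} for all x ∈ ℝ. -/

import Mathlib

noncomputable def Q : ℝ → ℝ := fun x => (5/2 : ℝ) ^ ((1:ℝ)/3) * (Real.cosh (3*x/2)) ^ (-(2:ℝ)/3)

noncomputable def P : ℝ → ℝ :=
  fun x => deriv Q x / Q x - 1 + 2 * (10:ℝ) ^ (-(1:ℝ)/3) * Real.exp x * Q x

lemma Q_pos (x : ℝ) : 0 < Q x := by
  unfold Q
  positivity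

lemma hasDerivAt_Q (x : ℝ) :
    HasDerivAt Q (-Real.tanh (3*x/2) * Q x) x := by
  have hc : 0 < Real.cosh (3*x/2) := Real.cosh_pos _
  have hlin : HasDerivAt (fun x : ℝ => 3*x/2) (3/2) x := by
    simpa using ((hasDerivAt_id x).const_mul (3:ℝ)).div_const 2
  have hcosh : HasDerivAt (fun x : ℝ => Real.cosh (3*x/2)) (Real.sinh (3*x/2) * (3/2)) x :=
    by have := (Real.hasDerivAt_cosh (3*x/2)).comp x hlin; exact this
  have hpow : HasDerivAt (fun x : ℝ => (Real.cosh (3*x/2)) ^ (-(2:ℝ)/3))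
      (Real.sinh (3*x/2) * (3/2) * (-(2:ℝ)/3) * Real.cosh (3*x/2) ^ ((-(2:ℝ)/3) - 1)) x :=
    hcosh.rpow_const (Or.inl hc.ne')
  have h := hpow.const_mul ((5/2 : ℝ) ^ ((1:ℝ)/3))
  have heq : (5/2 : ℝ) ^ ((1:ℝ)/3) *
      (Real.sinh (3*x/2) * (3/2) * (-(2:ℝ)/3) * Real.cosh (3*x/2) ^ ((-(2:ℝ)/3) - 1))
      = -Real.tanh (3*x/2) * Q x := by
    rw [Real.rpow_sub_one hc.ne', Real.tanh_eq_sinh_div_cosh]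
    unfold Q
    field_simp
  rw [heq] at h
  exact h

lemma P_eq (x : ℝ) :
    P x = 2 * ((1 + Real.exp (-(3*x))) ^ (-(2:ℝ)/3) - (1 + Real.exp (-(3*x)))⁻¹) := by
  have hc : 0 < Real.cosh (3*x/2) := Real.cosh_pos _
  have hderiv : deriv Q x / Q x = -Real.tanh (3*x/2) := by
    rw [(hasDerivAt_Q x).deriv]
    field_simp [(Q_pos x).ne']
  have ha : 0 < Real.exp (3*x/2) := Real.exp_pos _
  -- key identity: 1 + exp (-(3x)) = 2 cosh(3x/2) * exp (-(3x/2))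
  have hkey : (1 : ℝ) + Real.exp (-(3*x)) = (2 * Real.cosh (3*x/2)) * Real.exp (-(3*x/2)) := by
    rw [Real.cosh_eq, Real.exp_neg, Real.exp_neg,
      show (3:ℝ)*x = 3*x/2 + 3*x/2 by ring, Real.exp_add]
    field_simp
    ring
  -- part 1 : -tanh - 1 = -2 (1+u)⁻¹
  have h1 : -Real.tanh (3*x/2) - 1 = -2 * ((1 : ℝ) + Real.exp (-(3*x)))⁻¹ := by
    rw [Real.tanh_eq_sinh_div_cosh, hkey, Real.sinh_eq, Real.cosh_eq, Real.exp_neg,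
      show (3:ℝ)*x/2 = 3*x/2 by ring]
    have h2 : (0:ℝ) < Real.exp (3*x/2) + (Real.exp (3*x/2))⁻¹ := by positivity
    field_simp
    ring
  -- part 2 : 2 * 10^(-1/3) * exp x * Q x = 2 * (1+u)^(-2/3)
  have h2 : 2 * (10:ℝ) ^ (-(1:ℝ)/3) * Real.exp x * Q x
      = 2 * ((1 : ℝ) + Real.exp (-(3*x))) ^ (-(2:ℝ)/3) := by
    rw [hkey, Real.mul_rpow (by positivity) (Real.exp_pos _).le,
      Real.mul_rpow (by norm_num) hc.le, ← Real.exp_mul]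
    have hx : Real.exp (-(3 * x / 2) * (-(2:ℝ)/3)) = Real.exp x := by
      congr 1; ring
    rw [hx]
    unfold Q
    have hconst : (10:ℝ) ^ (-(1:ℝ)/3) * (5/2 : ℝ) ^ ((1:ℝ)/3) = (2:ℝ) ^ (-(2:ℝ)/3) := by
      rw [show (-(1:ℝ)/3) = -((1:ℝ)/3) by ring, Real.rpow_neg (by norm_num : (0:ℝ) ≤ 10),
        ← Real.inv_rpow (by norm_num : (0:ℝ) ≤ 10),
        ← Real.mul_rpow (by norm_num) (by norm_num),
        show ((10:ℝ)⁻¹ * (5/2)) = (2:ℝ) ^ (-2 : ℤ) by norm_num,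
        ← Real.rpow_intCast (2:ℝ) (-2), ← Real.rpow_mul (by norm_num : (0:ℝ) ≤ 2)]
      norm_num
    calc 2 * (10:ℝ) ^ (-(1:ℝ)/3) * Real.exp x * ((5/2 : ℝ) ^ ((1:ℝ)/3) * Real.cosh (3*x/2) ^ (-(2:ℝ)/3))
        = ((10:ℝ) ^ (-(1:ℝ)/3) * (5/2 : ℝ) ^ ((1:ℝ)/3)) *
            (2 * Real.exp x * Real.cosh (3*x/2) ^ (-(2:ℝ)/3)) := by ring
      _ = 2 * ((2:ℝ) ^ (-(2:ℝ)/3) * Real.cosh (3*x/2) ^ (-(2:ℝ)/3) * Real.exp x) := by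
          rw [hconst]; ring
  unfold P
  rw [hderiv]
  rw [h2]
  linarith [h1]

theorem P_decay : ∃ C : ℝ, 0 < C ∧ ∀ x : ℝ, |P x| ≤ C * Real.exp (-2 * |x|) := by
  refine ⟨2, by norm_num, fun x => ?_⟩
  set u := Real.exp (-(3*x)) with hu
  have hupos : 0 < u := Real.exp_pos _
  have hb : (1:ℝ) ≤ 1 + u := by linarith
  have hbpos : (0:ℝ) < 1 + u := by linarith
  have hge : (1 + u)⁻¹ ≤ (1 + u) ^ (-(2:ℝ)/3) := by
    rw [← Real.rpow_neg_one]
    exact Real.rpow_le_rpow_of_exponent_le hb (by norm_num)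
  have habs : |P x| = 2 * ((1 + u) ^ (-(2:ℝ)/3) - (1 + u)⁻¹) := by
    rw [P_eq x, abs_of_nonneg]
    nlinarith
  rw [habs]
  rcases le_or_gt 0 x with hx | hx
  · -- x ≥ 0 : diff ≤ u ≤ exp (-2x)
    have h1 : (1 + u) ^ (-(2:ℝ)/3) ≤ 1 := Real.rpow_le_one_of_one_le_of_nonpos hb (by norm_num)
    have h2 : 1 - (1 + u)⁻¹ ≤ u := by
      nlinarith [mul_inv_cancel₀ hbpos.ne', inv_nonneg.mpr hbpos.le, sq_nonneg u]
    have h3 : u ≤ Real.exp (-2 * |x|) := by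
      rw [abs_of_nonneg hx, hu]
      exact Real.exp_le_exp.mpr (by linarith)
    nlinarith
  · -- x < 0 : diff ≤ (1+u)^(-2/3) ≤ u^(-2/3) = exp (2x)
    have h1 : (1 + u) ^ (-(2:ℝ)/3) ≤ u ^ (-(2:ℝ)/3) :=
      Real.rpow_le_rpow_of_nonpos hupos (by linarith) (by norm_num)
    have h2 : u ^ (-(2:ℝ)/3) = Real.exp (-2 * |x|) := by
      rw [hu, ← Real.exp_mul, abs_of_neg hx]
      congr 1; ring
    have h3 : 0 ≤ (1 + u)⁻¹ := inv_nonneg.mpr hbpos.le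
    nlinarith
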